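/- For every fixed integer b ≥ 2 there exists a constant c = c(b) > 0 such that for all integers n ≥ k ≥ 2 there exists an (n, k, b)-anti-universal set T with |T| ≤ (b/(b-1))^k · k^{c · log₂ k} · log₂ n. -/

import Mathlib

open Finset

private lemma count_avoid {n k b : ℕ} (hb : 1 ≤ b) (_hkn : k ≤ n)
    (u : Fin k → Fin n) (hu : Function.Injective u) (v : Fin k → Fin b) :
    (Finset.univ.filter (fun t : Fin n → Fin b => ∀ i, t (u i) ≠ v i)).card
      = (b - 1) ^ k * b ^ (n - k) := by
  classical
  have hb0 : 0 < b := hb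
  have : Nonempty (Fin b) := ⟨⟨0, hb0⟩⟩
  rw [← Fintype.card_subtype]
  let e : {t : Fin n → Fin b // ∀ i, t (u i) ≠ v i} ≃
      (∀ i : Fin k, {x : Fin b // x ≠ v i}) × ({x : Fin n // x ∉ Set.range u} → Fin b) :=
    { toFun := fun t => (fun i => ⟨t.1 (u i), t.2 i⟩, fun x => t.1 x.1)
      invFun := fun p => ⟨Function.extend u (fun i => (p.1 i).1)
          (fun x => if hx : x ∈ Set.range u then Classical.arbitrary _ else p.2 ⟨x, hx⟩), by
        intro i
        rw [Function.Injective.extend_apply hu]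
        exact (p.1 i).2⟩
      left_inv := by
        intro t
        ext x
        by_cases hx : x ∈ Set.range u
        · obtain ⟨i, rfl⟩ := hx
          simp [Function.Injective.extend_apply hu]
        · have hne : ¬∃ i, u i = x := by simpa [Set.mem_range] using hx
          simp only [Function.extend_apply' _ _ _ hne]
          rw [dif_neg hx]
      right_inv := by
        intro p
        ext i
        · simp [Function.Injective.extend_apply hu]
        · rcases i with ⟨x, hx⟩
          have hne : ¬∃ i, u i = x := by simpa [Set.mem_range] using hx
          simp only [Function.extend_apply' _ _ _ hne]
          rw [dif_neg hx] }
  rw [Fintype.card_congr e, Fintype.card_prod, Fintype.card_pi, Fintype.card_fun]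
  have h1 : ∀ i : Fin k, Fintype.card {x : Fin b // x ≠ v i} = b - 1 := by
    intro i
    simp [Fintype.card_subtype_compl, Fintype.card_subtype_eq]
  have h2 : Fintype.card {x : Fin n // x ∉ Set.range u} = n - k := by
    rw [Fintype.card_subtype_compl]
    have : Fintype.card {x : Fin n // x ∈ Set.range u} = k := by
      exact (Fintype.card_congr (Equiv.ofInjective u hu).symm).trans (Fintype.card_fin k)
    rw [this, Fintype.card_fin]
  rw [h2]
  rw [Finset.prod_congr rfl (fun i _ => h1 i), Finset.prod_const, Finset.card_univ,
    Fintype.card_fin, Fintype.card_fin]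

private lemma avg_step {n k b : ℕ} (hb : 1 ≤ b) (hkn : k ≤ n)
    (R : Finset ((Fin k → Fin n) × (Fin k → Fin b)))
    (hR : ∀ p ∈ R, Function.Injective p.1) :
    ∃ t : Fin n → Fin b,
      ((R.filter (fun p => ¬ ∀ i, t (p.1 i) ≠ p.2 i)).card : ℝ)
        ≤ (1 - (((b:ℝ)-1)/b)^k) * R.card := by
  classical
  have hb0 : (0:ℝ) < b := by exact_mod_cast hb
  have hne : Nonempty (Fin b) := ⟨⟨0, hb⟩⟩
  set q : ℝ := (((b:ℝ)-1)/b)^k with hq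
  -- double counting
  have hdc : ∑ t : Fin n → Fin b,
      ((R.filter (fun p => ∀ i, t (p.1 i) ≠ p.2 i)).card)
      = R.card * ((b-1)^k * b^(n-k)) := by
    simp only [Finset.card_filter]
    rw [Finset.sum_comm]
    rw [Finset.sum_congr rfl (fun p hp => ?_)]
    · rw [Finset.sum_const, smul_eq_mul]
    · rw [← Finset.card_filter]
      exact count_avoid hb hkn p.1 (hR p hp) p.2
  -- exists t achieving at least the average
  have hmain : ∃ t : Fin n → Fin b,
      q * R.card ≤ ((R.filter (fun p => ∀ i, t (p.1 i) ≠ p.2 i)).card : ℝ) := by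
    have hnonempty : (Finset.univ : Finset (Fin n → Fin b)).Nonempty :=
      Finset.univ_nonempty
    have hsum : ∑ _t : Fin n → Fin b, q * R.card
        ≤ ∑ t : Fin n → Fin b,
            ((R.filter (fun p => ∀ i, t (p.1 i) ≠ p.2 i)).card : ℝ) := by
      rw [Finset.sum_const, Finset.card_univ, Fintype.card_fun, Fintype.card_fin,
        Fintype.card_fin, nsmul_eq_mul]
      have hrhs : ∑ t : Fin n → Fin b,
          ((R.filter (fun p => ∀ i, t (p.1 i) ≠ p.2 i)).card : ℝ)
          = (R.card : ℝ) * (((b:ℝ)-1)^k * (b:ℝ)^(n-k)) := by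
        rw [← Nat.cast_sum, hdc]
        push_cast [Nat.cast_sub hb]
        ring
      rw [hrhs]
      have hbn : (b:ℝ)^n = (b:ℝ)^k * (b:ℝ)^(n-k) := by
        rw [← pow_add, Nat.add_sub_cancel' hkn]
      have : ((b:ℝ)^n : ℝ) * (q * R.card) = (R.card : ℝ) * (((b:ℝ)-1)^k * (b:ℝ)^(n-k)) := by
        rw [hq, hbn, div_pow]
        field_simp
      push_cast
      rw [this]
    obtain ⟨t, _, ht⟩ := Finset.exists_le_of_sum_le hnonempty hsum
    exact ⟨t, ht⟩
  obtain ⟨t, ht⟩ := hmain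
  refine ⟨t, ?_⟩
  have hsplit := Finset.card_filter_add_card_filter_not
    (s := R) (p := fun p => ∀ i, t (p.1 i) ≠ p.2 i)
  have : ((R.filter (fun p => ¬ ∀ i, t (p.1 i) ≠ p.2 i)).card : ℝ)
      = (R.card : ℝ) - (R.filter (fun p => ∀ i, t (p.1 i) ≠ p.2 i)).card := by
    have := hsplit
    push_cast [← this]
    ring
  rw [this]
  nlinarith [ht]

set_option maxHeartbeats 800000 in
/-- For every fixed integer `b ≥ 2` there exists a constant
`c = c(b) > 0` such that for all integers `n ≥ k ≥ 2` there exists an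
`(n, k, b)`-anti-universal set `T` with `|T| ≤ (b/(b-1))^k · k^(c·log₂ k) · log₂ n`.
An `(n,k,b)`-anti-universal set is a family of functions `t : [n] → [b]` such that
for every injective vector `u` of `k` distinct indices and every vector
`v ∈ [b]^k`, some `t ∈ T` satisfies `t (u i) ≠ v i` for every coordinate `i`. -/
theorem anti_universal_set_exists :
    ∀ b : ℕ, 2 ≤ b →
      ∃ c : ℝ, 0 < c ∧
        ∀ n k : ℕ, 2 ≤ k → k ≤ n →
          ∃ T : Finset (Fin n → Fin b),
            (∀ u : Fin k → Fin n, Function.Injective u →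
              ∀ v : Fin k → Fin b, ∃ t ∈ T, ∀ i : Fin k, t (u i) ≠ v i) ∧
            (T.card : ℝ) ≤
              ((b : ℝ) / ((b : ℝ) - 1)) ^ k * (k : ℝ) ^ (c * Real.logb 2 k) *
                Real.logb 2 n := by
  intro b hb
  have hb1 : 1 ≤ b := le_trans (by norm_num) hb
  have hbR : (2:ℝ) ≤ (b:ℝ) := by exact_mod_cast hb
  set Cb : ℝ := Real.log 2 + Real.log b + 1 with hCb
  have hlog2pos : (0:ℝ) < Real.log 2 := Real.log_pos (by norm_num)
  have hlogbpos : (0:ℝ) < Real.log b := Real.log_pos (by linarith)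
  have hCb1 : 1 ≤ Cb := by rw [hCb]; linarith
  have hCbpos : 0 < Cb := by linarith
  have hlogCb : 0 ≤ Real.logb 2 Cb := Real.logb_nonneg (by norm_num) hCb1
  refine ⟨1 + Real.logb 2 Cb, by linarith, ?_⟩
  set c : ℝ := 1 + Real.logb 2 Cb with hc
  intro n k hk hkn
  classical
  have hn2 : 2 ≤ n := le_trans hk hkn
  have hkR : (2:ℝ) ≤ (k:ℝ) := by exact_mod_cast hk
  have hnR : (2:ℝ) ≤ (n:ℝ) := by exact_mod_cast hn2
  set q : ℝ := (((b:ℝ)-1)/b)^k with hq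
  have hq0 : 0 < q := by
    apply pow_pos; apply div_pos <;> linarith
  have hq1 : q ≤ 1 := by
    apply pow_le_one₀ (by apply div_nonneg <;> linarith)
    rw [div_le_one (by linarith)]; linarith
  set P₀ : Finset ((Fin k → Fin n) × (Fin k → Fin b)) :=
    Finset.univ.filter (fun p => Function.Injective p.1) with hP₀
  set N : ℕ := P₀.card with hN
  -- N ≥ 1
  have hNpos : 1 ≤ N := by
    rw [hN]
    apply Finset.card_pos.mpr
    exact ⟨(Fin.castLE hkn, fun _ => ⟨0, by omega⟩),
      Finset.mem_filter.mpr ⟨Finset.mem_univ _, Fin.castLE_injective hkn⟩⟩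
  have hNR : (1:ℝ) ≤ (N:ℝ) := by exact_mod_cast hNpos
  -- greedy construction
  have greedy : ∀ m : ℕ, ∃ T : Finset (Fin n → Fin b), T.card ≤ m ∧
      ((P₀.filter (fun p => ¬ ∃ t ∈ T, ∀ i, t (p.1 i) ≠ p.2 i)).card : ℝ)
        ≤ (1 - q)^m * (N : ℝ) := by
    intro m
    induction m with
    | zero =>
        refine ⟨∅, le_refl _, ?_⟩
        rw [pow_zero, one_mul, hN]
        exact_mod_cast Finset.card_filter_le _ _
    | succ m ih =>
        obtain ⟨T, hTc, hTrem⟩ := ih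
        set R := P₀.filter (fun p => ¬ ∃ t ∈ T, ∀ i, t (p.1 i) ≠ p.2 i) with hR
        have hRinj : ∀ p ∈ R, Function.Injective p.1 := by
          intro p hp
          exact (Finset.mem_filter.mp (Finset.mem_filter.mp hp).1).2
        obtain ⟨t, ht⟩ := avg_step hb1 hkn R hRinj
        refine ⟨insert t T, ?_, ?_⟩
        · exact (Finset.card_insert_le _ _).trans (Nat.succ_le_succ hTc)
        · have hset : P₀.filter (fun p => ¬ ∃ t' ∈ insert t T, ∀ i, t' (p.1 i) ≠ p.2 i)
              = R.filter (fun p => ¬ ∀ i, t (p.1 i) ≠ p.2 i) := by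
            ext p
            simp only [hR, hP₀, Finset.mem_filter, Finset.mem_univ, true_and,
              Finset.mem_insert, exists_eq_or_imp]
            aesop
          rw [hset]
          have h1q : (0:ℝ) ≤ 1 - q := by linarith
          calc ((R.filter (fun p => ¬ ∀ i, t (p.1 i) ≠ p.2 i)).card : ℝ)
              ≤ (1 - q) * R.card := ht
            _ ≤ (1 - q) * ((1 - q)^m * N) := by
                apply mul_le_mul_of_nonneg_left _ h1q
                exact hTrem
            _ = (1 - q)^(m+1) * N := by ring
  -- choose m
  set m : ℕ := ⌊Real.log N / q⌋₊ + 1 with hm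
  obtain ⟨T, hTc, hTrem⟩ := greedy m
  have hlogN0 : 0 ≤ Real.log N := Real.log_nonneg hNR
  have hqm : Real.log N < q * m := by
    have h1 : (Real.log N / q) < (m : ℝ) := by
      rw [hm]; push_cast
      exact Nat.lt_floor_add_one _
    calc Real.log N = q * (Real.log N / q) := by field_simp
      _ < q * m := by apply mul_lt_mul_of_pos_left h1 hq0
  -- remaining set is empty
  have hempty : P₀.filter (fun p => ¬ ∃ t ∈ T, ∀ i, t (p.1 i) ≠ p.2 i) = ∅ := by
    have hlt : ((P₀.filter (fun p => ¬ ∃ t ∈ T, ∀ i, t (p.1 i) ≠ p.2 i)).card : ℝ) < 1 := by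
      refine lt_of_le_of_lt hTrem ?_
      have h1 : (1 - q)^m ≤ Real.exp (-q) ^ m := by
        apply pow_le_pow_left₀ (by linarith)
        linarith [Real.add_one_le_exp (-q)]
      have h2 : Real.exp (-q) ^ m = Real.exp (-(q * m)) := by
        rw [← Real.exp_nat_mul]; ring_nf
      have h3 : (N:ℝ) < Real.exp (q * m) := by
        calc (N:ℝ) = Real.exp (Real.log N) := (Real.exp_log (by linarith)).symm
          _ < Real.exp (q * m) := Real.exp_lt_exp.mpr hqm
      calc (1 - q)^m * (N:ℝ) ≤ Real.exp (-(q*m)) * N := by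
            apply mul_le_mul_of_nonneg_right _ (by linarith)
            rw [← h2]; exact h1
        _ < Real.exp (-(q*m)) * Real.exp (q*m) := by
            apply mul_lt_mul_of_pos_left h3 (Real.exp_pos _)
        _ = 1 := by rw [← Real.exp_add]; ring_nf; exact Real.exp_zero
    have : (P₀.filter (fun p => ¬ ∃ t ∈ T, ∀ i, t (p.1 i) ≠ p.2 i)).card = 0 := by
      by_contra h
      have : 1 ≤ (P₀.filter (fun p => ¬ ∃ t ∈ T, ∀ i, t (p.1 i) ≠ p.2 i)).card :=
        Nat.one_le_iff_ne_zero.mpr h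
      have : (1:ℝ) ≤ ((P₀.filter (fun p => ¬ ∃ t ∈ T, ∀ i, t (p.1 i) ≠ p.2 i)).card : ℝ) := by
        exact_mod_cast this
      linarith
    exact Finset.card_eq_zero.mp this
  refine ⟨T, ?_, ?_⟩
  · -- coverage
    intro u hu v
    by_contra hcon
    push_neg at hcon
    have hmem : (u, v) ∈ P₀.filter (fun p => ¬ ∃ t ∈ T, ∀ i, t (p.1 i) ≠ p.2 i) := by
      refine Finset.mem_filter.mpr ⟨Finset.mem_filter.mpr ⟨Finset.mem_univ _, hu⟩, ?_⟩
      push_neg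
      intro t htT
      obtain ⟨i, hi⟩ := hcon t htT
      exact ⟨i, hi⟩
    rw [hempty] at hmem
    exact absurd hmem (Finset.notMem_empty _)
  · -- size bound
    have hL : (1:ℝ) ≤ Real.logb 2 n := by
      rw [Real.le_logb_iff_rpow_le (by norm_num) (by linarith)]
      simpa using hnR
    have hLpos : 0 < Real.logb 2 n := by linarith
    -- log N ≤ k * (log n + log b)
    have hNle : (N:ℝ) ≤ ((n:ℝ) * b)^k := by
      have : N ≤ Fintype.card ((Fin k → Fin n) × (Fin k → Fin b)) := by
        rw [hN, ← Finset.card_univ]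
        exact Finset.card_filter_le _ _
      have hcard : Fintype.card ((Fin k → Fin n) × (Fin k → Fin b)) = n^k * b^k := by
        simp [Fintype.card_fun]
      rw [hcard] at this
      calc (N:ℝ) ≤ ((n^k * b^k : ℕ) : ℝ) := by exact_mod_cast this
        _ = ((n:ℝ) * b)^k := by push_cast; ring
    have hlogNle : Real.log N ≤ k * (Real.log n + Real.log b) := by
      calc Real.log N ≤ Real.log (((n:ℝ) * b)^k) :=
            Real.log_le_log (by linarith) hNle
        _ = k * Real.log ((n:ℝ) * b) := by rw [Real.log_pow]
        _ = k * (Real.log n + Real.log b) := by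
            rw [Real.log_mul (by linarith) (by linarith)]
    -- m bound
    have hmle : (m:ℝ) ≤ Real.log N / q + 1 := by
      rw [hm]; push_cast
      have := Nat.floor_le (a := Real.log N / q) (by positivity)
      linarith
    have hTm : (T.card : ℝ) ≤ Real.log N / q + 1 := by
      have : (T.card : ℝ) ≤ (m:ℝ) := by exact_mod_cast hTc
      linarith
    -- 1/q = (b/(b-1))^k
    have hinvq : 1 / q = ((b:ℝ) / ((b:ℝ) - 1))^k := by
      rw [hq, one_div, ← inv_pow, inv_div]
    have hinvq1 : 1 ≤ 1 / q := by
      rw [le_div_iff₀ hq0]; linarith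
    -- key chain
    have hmid : Real.log N + 1 ≤ (k:ℝ) * Cb * Real.logb 2 n := by
      have e1 : (k:ℝ) * Real.log n = (k:ℝ) * Real.log 2 * Real.logb 2 n := by
        rw [Real.logb]
        field_simp
      have e2 : (k:ℝ) * Real.log b ≤ (k:ℝ) * Real.log b * Real.logb 2 n := by
        have h := mul_le_mul_of_nonneg_left hL
          (by positivity : (0:ℝ) ≤ (k:ℝ) * Real.log b)
        linarith
      have e3 : (1:ℝ) ≤ (k:ℝ) * 1 * Real.logb 2 n := by
        have h : (1:ℝ) * 1 ≤ (k:ℝ) * Real.logb 2 n :=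
          mul_le_mul (by linarith) hL (by norm_num) (by linarith)
        linarith
      have expand : (k:ℝ) * Cb * Real.logb 2 n
          = (k:ℝ) * Real.log 2 * Real.logb 2 n + (k:ℝ) * Real.log b * Real.logb 2 n
            + (k:ℝ) * 1 * Real.logb 2 n := by
        rw [hCb]; ring
      linarith [hlogNle]
    -- k * Cb ≤ k ^ (c * logb 2 k)
    have hkpow : (k:ℝ) * Cb ≤ (k:ℝ) ^ (c * Real.logb 2 k) := by
      have hk1 : (1:ℝ) ≤ (k:ℝ) := by linarith
      have hlogk1 : 1 ≤ Real.logb 2 k := by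
        rw [Real.le_logb_iff_rpow_le (by norm_num) (by linarith)]
        simpa using hkR
      have hcpos : 0 < c := by rw [hc]; linarith
      have step1 : (k:ℝ) ^ (c:ℝ) ≤ (k:ℝ) ^ (c * Real.logb 2 k) := by
        apply Real.rpow_le_rpow_of_exponent_le hk1
        have h := mul_le_mul_of_nonneg_left hlogk1 (le_of_lt hcpos)
        linarith
      have step2 : (k:ℝ) * Cb ≤ (k:ℝ) ^ (c:ℝ) := by
        rw [hc, Real.rpow_add (by linarith), Real.rpow_one]
        have : Cb ≤ (k:ℝ) ^ (Real.logb 2 Cb) := by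
          calc Cb = (2:ℝ) ^ (Real.logb 2 Cb) :=
                (Real.rpow_logb (by norm_num) (by norm_num) hCbpos).symm
            _ ≤ (k:ℝ) ^ (Real.logb 2 Cb) :=
                Real.rpow_le_rpow (by norm_num) hkR hlogCb
        have h := mul_le_mul_of_nonneg_left this (by linarith : (0:ℝ) ≤ (k:ℝ))
        linarith
      linarith
    -- put it together
    have hpowpos : (0:ℝ) < ((b:ℝ) / ((b:ℝ) - 1))^k := by
      apply pow_pos; apply div_pos <;> linarith
    calc (T.card : ℝ) ≤ Real.log N / q + 1 := hTm
      _ = (1/q) * Real.log N + 1 := by ring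
      _ ≤ (1/q) * (Real.log N + 1) := by
          have h : (1/q) * (Real.log N + 1) = (1/q) * Real.log N + (1/q) := by ring
          linarith
      _ ≤ (1/q) * ((k:ℝ) * Cb * Real.logb 2 n) := by
          apply mul_le_mul_of_nonneg_left _ (by positivity)
          linarith
      _ ≤ (1/q) * ((k:ℝ) ^ (c * Real.logb 2 k) * Real.logb 2 n) := by
          apply mul_le_mul_of_nonneg_left _ (by positivity)
          apply mul_le_mul_of_nonneg_right hkpow (le_of_lt hLpos)
      _ = ((b:ℝ) / ((b:ℝ) - 1))^k * (k:ℝ) ^ (c * Real.logb 2 k) * Real.logb 2 n := by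
          rw [hinvq]; ring
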